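/- Let W₁, W₂, ... be i.i.d. random variables with distribution N(μ, σ²), and let μ̂_N = (1/N)∑_{q=1}^N W_q and σ̂²_N = (1/(N−1))∑_{q=1}^N (W_q − μ̂_N)² be the sample mean and sample variance. Then N^{3/4} |σ̂²_{N+1} − σ̂²_N| → 0 almost surely as N → ∞. -/

import Mathlib

open MeasureTheory ProbabilityTheory Filter Real
open scoped NNReal

/-- Sample mean of the first `N` observations `W 0, ..., W (N-1)`. -/
noncomputable def sampleMean (W : ℕ → ℝ) (N : ℕ) : ℝ :=
  (1 / (N : ℝ)) * ∑ q ∈ Finset.range N, W q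

/-- Unbiased sample variance of the first `N` observations. -/
noncomputable def sampleVar (W : ℕ → ℝ) (N : ℕ) : ℝ :=
  (1 / ((N : ℝ) - 1)) * ∑ q ∈ Finset.range N, (W q - sampleMean W N) ^ 2

lemma aux_int_pow_exp {b : ℝ} (hb : 0 < b) (k : ℕ) :
    Integrable fun x : ℝ => x ^ k * Real.exp (-b * x ^ 2) := by
  have hint : Integrable fun x : ℝ =>
      (k.factorial : ℝ) * Real.exp (1 / (2 * b)) * Real.exp (-(b / 2) * x ^ 2) :=
    (integrable_exp_neg_mul_sq (by positivity)).const_mul _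
  refine hint.mono' (Continuous.aestronglyMeasurable (by continuity)) ?_
  filter_upwards with x
  rw [norm_mul, norm_pow, Real.norm_eq_abs, Real.norm_eq_abs, Real.abs_exp]
  have h1 : |x| ^ k ≤ k.factorial * Real.exp |x| := by
    have h := Real.pow_div_factorial_le_exp (x := |x|) (abs_nonneg x) k
    rw [div_le_iff₀ (by positivity)] at h
    calc |x| ^ k ≤ Real.exp |x| * k.factorial := h
    _ = _ := by ring
  calc |x| ^ k * Real.exp (-b * x ^ 2)
      ≤ (k.factorial * Real.exp |x|) * Real.exp (-b * x ^ 2) :=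
        mul_le_mul_of_nonneg_right h1 (Real.exp_pos _).le
    _ = k.factorial * Real.exp (|x| + -b * x ^ 2) := by rw [Real.exp_add]; ring
    _ ≤ k.factorial * Real.exp (1 / (2 * b) + -(b / 2) * x ^ 2) := by
        apply mul_le_mul_of_nonneg_left _ (by positivity)
        apply Real.exp_le_exp.2
        have h3 : |x| - b / 2 * x ^ 2 ≤ 1 / (2 * b) := by
          rw [le_div_iff₀ (by positivity), ← sq_abs x]
          nlinarith [sq_nonneg (b * |x| - 1)]
        linarith
    _ = _ := by rw [Real.exp_add]; ring

lemma aux_int_pow_gauss (μ : ℝ) (v : ℝ≥0) (k : ℕ) :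
    Integrable (fun x : ℝ => x ^ k) (gaussianReal μ v) := by
  by_cases hv : v = 0
  · subst hv
    rw [gaussianReal_zero_var]
    have hae : (fun x : ℝ => x ^ k) =ᵐ[Measure.dirac μ] fun _ => μ ^ k := by
      rw [MeasureTheory.ae_dirac_eq]
      exact Filter.eventually_pure.2 rfl
    exact (integrable_const _).congr hae.symm
  · rw [gaussianReal_of_var_ne_zero _ hv,
      integrable_withDensity_iff (measurable_gaussianPDF _ _)
        (Filter.Eventually.of_forall fun x => ENNReal.ofReal_lt_top)]
    have hb : (0 : ℝ) < 1 / (2 * (v : ℝ)) := by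
      have : (0:ℝ) < (v:ℝ) := lt_of_le_of_ne (v.coe_nonneg) (by exact_mod_cast (Ne.symm hv))
      positivity
    have key : Integrable fun x : ℝ => x ^ k * Real.exp (-(1 / (2 * (v:ℝ))) * (x - μ) ^ 2) := by
      have hg : Integrable fun y : ℝ => (y + μ) ^ k * Real.exp (-(1 / (2 * (v:ℝ))) * y ^ 2) := by
        have : (fun y : ℝ => (y + μ) ^ k * Real.exp (-(1 / (2 * (v:ℝ))) * y ^ 2)) =
            fun y : ℝ => ∑ m ∈ Finset.range (k + 1),
              (μ ^ (k - m) * (k.choose m : ℝ)) * (y ^ m * Real.exp (-(1 / (2 * (v:ℝ))) * y ^ 2)) := by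
          funext y
          rw [add_pow, Finset.sum_mul]
          congr 1; funext m; ring
        rw [this]
        exact integrable_finset_sum _ fun m _ => ((aux_int_pow_exp hb m).const_mul _)
      have := hg.comp_sub_right μ
      simpa using this
    have heq : (fun x : ℝ => x ^ k * (gaussianPDF μ v x).toReal) =
        fun x : ℝ => (√(2 * π * (v:ℝ)))⁻¹ * (x ^ k * Real.exp (-(1 / (2 * (v:ℝ))) * (x - μ) ^ 2)) := by
      funext x
      rw [gaussianPDF, ENNReal.toReal_ofReal (gaussianPDFReal_nonneg _ _ _), gaussianPDFReal]
      have harg : -(x - μ) ^ 2 / (2 * (v:ℝ)) = -(1 / (2 * (v:ℝ))) * (x - μ) ^ 2 := by ring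
      rw [harg]; ring
    rw [heq]
    exact key.const_mul _

lemma sumsq_eq (W : ℕ → ℝ) {n : ℕ} (hn : (n : ℝ) ≠ 0) :
    ∑ q ∈ Finset.range n, (W q - sampleMean W n) ^ 2 =
      ∑ q ∈ Finset.range n, W q ^ 2 - (∑ q ∈ Finset.range n, W q) ^ 2 / n := by
  have hm : sampleMean W n = (∑ q ∈ Finset.range n, W q) / n := by
    rw [sampleMean, one_div, inv_mul_eq_div]
  have hexp : ∀ q ∈ Finset.range n, (W q - sampleMean W n) ^ 2
      = W q ^ 2 - (2 * ((∑ q ∈ Finset.range n, W q) / n)) * W q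
        + ((∑ q ∈ Finset.range n, W q) / n) ^ 2 := by
    intro q _; rw [hm]; ring
  rw [Finset.sum_congr rfl hexp, Finset.sum_add_distrib, Finset.sum_sub_distrib,
    ← Finset.mul_sum, Finset.sum_const, Finset.card_range, nsmul_eq_mul]
  field_simp
  ring

lemma sampleVar_eq (W : ℕ → ℝ) {n : ℕ} (hn : (n : ℝ) ≠ 0) :
    sampleVar W n = (∑ q ∈ Finset.range n, W q ^ 2
      - (∑ q ∈ Finset.range n, W q) ^ 2 / n) / ((n : ℝ) - 1) := by
  rw [sampleVar, sumsq_eq W hn, one_div, inv_mul_eq_div]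

lemma diff_eq (W : ℕ → ℝ) {n : ℕ} (hn : 2 ≤ n) :
    sampleVar W (n + 1) - sampleVar W n =
      (W n - (∑ q ∈ Finset.range n, W q) / n) ^ 2 / ((n : ℝ) + 1)
      - ((∑ q ∈ Finset.range n, W q ^ 2) / n
          - ((∑ q ∈ Finset.range n, W q) / n) ^ 2) / ((n : ℝ) - 1) := by
  have hn0 : (0 : ℝ) < n := by exact_mod_cast Nat.lt_of_lt_of_le (by norm_num) hn
  have hn2 : (2 : ℝ) ≤ n := by exact_mod_cast hn
  have hn1 : (n : ℝ) - 1 ≠ 0 := by linarith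
  have hns : ((n + 1 : ℕ) : ℝ) ≠ 0 := by push_cast; linarith
  rw [sampleVar_eq W (ne_of_gt hn0), sampleVar_eq W hns,
    Finset.sum_range_succ (fun q => W q ^ 2), Finset.sum_range_succ W]
  push_cast
  field_simp [hn0.ne']
  ring

open Topology in
lemma det_main (W : ℕ → ℝ) (a b c : ℝ)
    (h1 : Tendsto (fun n : ℕ => (∑ q ∈ Finset.range n, W q) / n) atTop (𝓝 a))
    (h2 : Tendsto (fun n : ℕ => (∑ q ∈ Finset.range n, W q ^ 2) / n) atTop (𝓝 b))
    (h3 : Tendsto (fun n : ℕ => (∑ q ∈ Finset.range n, W q ^ 8) / n) atTop (𝓝 c)) :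
    Tendsto (fun N : ℕ => (N : ℝ) ^ ((3 : ℝ) / 4) *
      |sampleVar W (N + 1) - sampleVar W N|) atTop (𝓝 0) := by
  set A : ℕ → ℝ := fun n => (∑ q ∈ Finset.range n, W q) / n with hA_def
  set B : ℕ → ℝ := fun n => (∑ q ∈ Finset.range n, W q ^ 2) / n with hB_def
  -- ratio limits
  have hinv4 : Tendsto (fun n : ℕ => ((n:ℝ) ^ ((1:ℝ)/4))⁻¹) atTop (𝓝 0) :=
    ((tendsto_rpow_atTop (by norm_num)).comp tendsto_natCast_atTop_atTop).inv_tendsto_atTop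
  have hone : Tendsto (fun n : ℕ => 1 / (n:ℝ)) atTop (𝓝 0) :=
    tendsto_one_div_atTop_nhds_zero_nat
  have hratio : Tendsto (fun n : ℕ => ((n:ℝ) + 1) / n) atTop (𝓝 1) := by
    have h0 : Tendsto (fun n : ℕ => 1 + 1 / (n:ℝ)) atTop (𝓝 (1 + 0)) :=
      tendsto_const_nhds.add hone
    rw [add_zero] at h0
    apply h0.congr'
    filter_upwards [eventually_ge_atTop 1] with n hn
    have hn0 : (n:ℝ) ≠ 0 := by
      have : (1:ℝ) ≤ n := by exact_mod_cast hn
      linarith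
    field_simp
  have hratio1 : Tendsto (fun n : ℕ => (n:ℝ) / ((n:ℝ) + 1)) atTop (𝓝 1) := by
    have hsub : Tendsto (fun n : ℕ => 1 - 1 / ((n:ℝ) + 1)) atTop (𝓝 (1 - 0)) := by
      refine tendsto_const_nhds.sub ?_
      apply Tendsto.div_atTop tendsto_const_nhds
      exact tendsto_atTop_add_const_right atTop 1 tendsto_natCast_atTop_atTop
    rw [sub_zero] at hsub
    apply hsub.congr'
    filter_upwards [eventually_ge_atTop 1] with n hn
    have hn0 : (0:ℝ) < (n:ℝ) + 1 := by positivity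
    field_simp
    ring
  -- step (i): W n ^ 8 / n → 0
  have hxo : Tendsto (fun n : ℕ => W n ^ 8 / n) atTop (𝓝 0) := by
    have hshift : Tendsto (fun n : ℕ => (∑ q ∈ Finset.range (n+1), W q ^ 8) / ((n:ℝ)+1))
        atTop (𝓝 c) := by
      have := h3.comp (tendsto_add_atTop_nat 1)
      apply this.congr
      intro n
      simp only [Function.comp_apply]
      push_cast
      rfl
    have hmulr : Tendsto (fun n : ℕ =>
        ((∑ q ∈ Finset.range (n+1), W q ^ 8) / ((n:ℝ)+1)) * (((n:ℝ)+1)/n))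
        atTop (𝓝 (c * 1)) := hshift.mul hratio
    rw [mul_one] at hmulr
    have hsub := hmulr.sub h3
    rw [sub_self] at hsub
    apply hsub.congr'
    filter_upwards [eventually_ge_atTop 1] with n hn
    have hn0 : (n:ℝ) ≠ 0 := by
      have : (1:ℝ) ≤ n := by exact_mod_cast hn
      linarith
    have hn1 : ((n:ℝ)+1) ≠ 0 := by positivity
    rw [Finset.sum_range_succ]
    field_simp
    ring

  -- step (ii): W n ^ 2 / n^{1/4} → 0
  have hx2 : Tendsto (fun n : ℕ => W n ^ 2 / (n:ℝ) ^ ((1:ℝ)/4)) atTop (𝓝 0) := by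
    have h := hxo.rpow_const (p := (1:ℝ)/4) (Or.inr (by norm_num))
    rw [Real.zero_rpow (by norm_num)] at h
    apply h.congr'
    filter_upwards [eventually_ge_atTop 1] with n hn
    have hn0 : (0:ℝ) < n := by exact_mod_cast Nat.lt_of_lt_of_le (by norm_num) hn
    rw [Real.div_rpow (by positivity) hn0.le]
    congr 1
    rw [show W n ^ 8 = (W n ^ 2) ^ (4:ℕ) by ring, ← Real.rpow_natCast (W n ^ 2) 4,
      ← Real.rpow_mul (sq_nonneg _)]
    norm_num
  -- step (v): (W n - A n)^2 / n^{1/4} → 0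
  have hsq : Tendsto (fun n : ℕ => (W n - A n) ^ 2 / (n:ℝ) ^ ((1:ℝ)/4)) atTop (𝓝 0) := by
    have hup : Tendsto (fun n : ℕ =>
        2 * (W n ^ 2 / (n:ℝ) ^ ((1:ℝ)/4)) + 2 * (A n ^ 2 * ((n:ℝ) ^ ((1:ℝ)/4))⁻¹))
        atTop (𝓝 (2 * 0 + 2 * (a ^ 2 * 0))) :=
      (hx2.const_mul 2).add (((h1.pow 2).mul hinv4).const_mul 2)
    norm_num at hup
    apply squeeze_zero' ?_ ?_ hup
    · filter_upwards [eventually_ge_atTop 1] with n hn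
      have hn0 : (0:ℝ) < (n:ℝ) ^ ((1:ℝ)/4) := by
        have : (0:ℝ) < n := by exact_mod_cast Nat.lt_of_lt_of_le (by norm_num) hn
        positivity
      positivity
    · filter_upwards [eventually_ge_atTop 1] with n hn
      have hn0 : (0:ℝ) < (n:ℝ) ^ ((1:ℝ)/4) := by
        have : (0:ℝ) < n := by exact_mod_cast Nat.lt_of_lt_of_le (by norm_num) hn
        positivity
      have hb : (W n - A n) ^ 2 ≤ 2 * W n ^ 2 + 2 * A n ^ 2 := by
        nlinarith [sq_nonneg (W n + A n)]
      calc (W n - A n) ^ 2 / (n:ℝ) ^ ((1:ℝ)/4)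
          ≤ (2 * W n ^ 2 + 2 * A n ^ 2) / (n:ℝ) ^ ((1:ℝ)/4) := by
            gcongr
        _ = 2 * (W n ^ 2 / (n:ℝ) ^ ((1:ℝ)/4)) + 2 * (A n ^ 2 * ((n:ℝ) ^ ((1:ℝ)/4))⁻¹) := by
            field_simp
  -- step (vii): n^{3/4}/(n-1) → 0
  have hq : Tendsto (fun n : ℕ => (n:ℝ) ^ ((3:ℝ)/4) / ((n:ℝ) - 1)) atTop (𝓝 0) := by
    have hn1 : Tendsto (fun n : ℕ => (n:ℝ) / ((n:ℝ) - 1)) atTop (𝓝 1) := by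
      have hsub : Tendsto (fun n : ℕ => 1 + 1 / ((n:ℝ) - 1)) atTop (𝓝 (1 + 0)) := by
        refine tendsto_const_nhds.add ?_
        apply Tendsto.div_atTop tendsto_const_nhds
        exact tendsto_atTop_add_const_right atTop (-1) tendsto_natCast_atTop_atTop
      rw [add_zero] at hsub
      apply hsub.congr'
      filter_upwards [eventually_ge_atTop 2] with n hn
      have hn2 : (2:ℝ) ≤ n := by exact_mod_cast hn
      have hn0 : (n:ℝ) - 1 ≠ 0 := by linarith
      field_simp
      ring
    have hprod : Tendsto (fun n : ℕ => ((n:ℝ) / ((n:ℝ) - 1)) * ((n:ℝ) ^ ((1:ℝ)/4))⁻¹)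
        atTop (𝓝 (1 * 0)) := hn1.mul hinv4
    rw [mul_zero] at hprod
    apply hprod.congr'
    filter_upwards [eventually_ge_atTop 2] with n hn
    have hn2 : (2:ℝ) ≤ n := by exact_mod_cast hn
    have hn0 : (0:ℝ) < n := by linarith
    have hpq : (n:ℝ) ^ ((3:ℝ)/4) * (n:ℝ) ^ ((1:ℝ)/4) = n := by
      rw [← Real.rpow_add hn0]
      norm_num
    have hp0 : (0:ℝ) < (n:ℝ) ^ ((1:ℝ)/4) := by positivity
    have hm1 : (n:ℝ) - 1 ≠ 0 := by linarith
    field_simp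
    linear_combination (-1 : ℝ) * hpq
  -- combine
  have hBA : Tendsto (fun n : ℕ => B n - A n ^ 2) atTop (𝓝 (b - a ^ 2)) := h2.sub (h1.pow 2)
  have hg : Tendsto (fun n : ℕ =>
      ((n:ℝ) / ((n:ℝ) + 1)) * ((W n - A n) ^ 2 / (n:ℝ) ^ ((1:ℝ)/4))
        - ((n:ℝ) ^ ((3:ℝ)/4) / ((n:ℝ) - 1)) * (B n - A n ^ 2))
      atTop (𝓝 (1 * 0 - 0 * (b - a ^ 2))) := (hratio1.mul hsq).sub (hq.mul hBA)
  norm_num at hg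
  have habs := hg.abs
  rw [abs_zero] at habs
  apply habs.congr'
  filter_upwards [eventually_ge_atTop 2] with n hn
  have hn2 : (2:ℝ) ≤ n := by exact_mod_cast hn
  have hn0 : (0:ℝ) < n := by linarith
  have hΔ := diff_eq W hn
  rw [hΔ]
  have hpq : (n:ℝ) ^ ((3:ℝ)/4) * (n:ℝ) ^ ((1:ℝ)/4) = n := by
    rw [← Real.rpow_add hn0]
    norm_num
  have hp0 : (0:ℝ) < (n:ℝ) ^ ((1:ℝ)/4) := by positivity
  have hq0 : (0:ℝ) ≤ (n:ℝ) ^ ((3:ℝ)/4) := by positivity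
  have hm1 : (n:ℝ) - 1 ≠ 0 := by linarith
  have hp1 : (n:ℝ) + 1 ≠ 0 := by linarith
  have hgen : ∀ p q' s t : ℝ, 0 < p → q' * p = (n:ℝ) →
      ((n:ℝ) / ((n:ℝ) + 1)) * (s / p) - (q' / ((n:ℝ) - 1)) * t
        = q' * (s / ((n:ℝ) + 1) - t / ((n:ℝ) - 1)) := by
    intro p q' s t hp hqp
    rw [← hqp] at hm1 hp1 ⊢
    field_simp
  have hgid := hgen ((n:ℝ) ^ ((1:ℝ)/4)) ((n:ℝ) ^ ((3:ℝ)/4)) ((W n - A n) ^ 2)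
    (B n - A n ^ 2) hp0 hpq
  rw [hgid, abs_mul, abs_of_nonneg hq0]


/-- For i.i.d. Gaussian observations, `N^{3/4} |σ̂²_{N+1} − σ̂²_N| → 0`
almost surely. -/
theorem sample_variance_one_step_fluctuation
    {Ω : Type*} [MeasureSpace Ω] [IsProbabilityMeasure (ℙ : Measure Ω)]
    (μ : ℝ) (v : ℝ≥0) (W : ℕ → Ω → ℝ)
    (hmeas : ∀ i, Measurable (W i))
    (hindep : iIndepFun W ℙ)
    (hdist : ∀ i, Measure.map (W i) ℙ = gaussianReal μ v) :
    ∀ᵐ ω ∂ℙ, Tendsto (fun N : ℕ =>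
        (N : ℝ) ^ ((3 : ℝ) / 4) *
          |sampleVar (fun q => W q ω) (N + 1) - sampleVar (fun q => W q ω) N|)
      atTop (nhds 0) := by
  have hident : ∀ i, IdentDistrib (W i) (W 0) ℙ ℙ := fun i =>
    ⟨(hmeas i).aemeasurable, (hmeas 0).aemeasurable, by rw [hdist i, hdist 0]⟩
  have slln : ∀ k : ℕ, ∀ᵐ ω ∂ℙ, Tendsto
      (fun n : ℕ => (∑ q ∈ Finset.range n, (W q ω) ^ k) / n) atTop
      (nhds (∫ ω, (W 0 ω) ^ k ∂ℙ)) := by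
    intro k
    have hpowm : Measurable fun x : ℝ => x ^ k := measurable_id.pow_const k
    have hint : Integrable (fun ω => (W 0 ω) ^ k) ℙ := by
      have hg : Integrable (fun x : ℝ => x ^ k) (Measure.map (W 0) ℙ) := by
        rw [hdist 0]; exact aux_int_pow_gauss μ v k
      have := (integrable_map_measure hpowm.aestronglyMeasurable
        (hmeas 0).aemeasurable).1 hg
      exact this
    have hindep' : Pairwise (Function.onFun (fun f g => IndepFun f g ℙ) fun i ω => (W i ω) ^ k) :=
      fun i j hij => (hindep.indepFun hij).comp hpowm hpowm
    have hident' : ∀ i, IdentDistrib (fun ω => (W i ω) ^ k) (fun ω => (W 0 ω) ^ k) ℙ ℙ :=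
      fun i => (hident i).comp hpowm
    exact strong_law_ae_real _ hint hindep' hident'
  filter_upwards [slln 1, slln 2, slln 8] with ω hω1 hω2 hω8
  have h1 : Tendsto (fun n : ℕ => (∑ q ∈ Finset.range n, W q ω) / n) atTop
      (nhds (∫ ω, (W 0 ω) ^ 1 ∂ℙ)) := by
    apply hω1.congr
    intro n
    simp [pow_one]
  exact det_main _ _ _ _ h1 hω2 hω8
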